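/- The series \(\sum_{k=2}^\infty \left| \sum_{k/2 < m \le k-1} m^{-s_1} (k-m)^{-s_2} \right|^2 k^{-s_3}\) with real \(s_3\) converges absolutely whenever \(2\Re(s_1)+s_3 > 1\) and \(2\Re(s_1)+2\Re(s_2)+s_3 > 3\). -/

import Mathlib

/-- Auxiliary bound: if `k/2 ≤ m ≤ k` with `m > 0`, then `m ^ (-a) ≤ 2 ^ |a| * k ^ (-a)`. -/
lemma aux_rpow_half (a : ℝ) {m k : ℕ} (hm : 0 < m) (hmk : m ≤ k) (hk2 : (k : ℝ) ≤ 2 * m) :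
    (m : ℝ) ^ (-a) ≤ 2 ^ |a| * (k : ℝ) ^ (-a) := by
  have hm0 : (0:ℝ) < m := by exact_mod_cast hm
  have hk0 : (0:ℝ) < k := lt_of_lt_of_le hm0 (by exact_mod_cast hmk)
  rcases le_total 0 a with ha | ha
  · rw [abs_of_nonneg ha]
    have h1 : ((k:ℝ)/2) ^ a ≤ (m:ℝ) ^ a :=
      Real.rpow_le_rpow (by positivity) (by linarith) ha
    have h2 : (m:ℝ) ^ (-a) ≤ ((k:ℝ)/2) ^ (-a) := by
      rw [Real.rpow_neg hm0.le, Real.rpow_neg (by positivity)]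
      exact inv_anti₀ (Real.rpow_pos_of_pos (by positivity) a) h1
    calc (m:ℝ) ^ (-a) ≤ ((k:ℝ)/2) ^ (-a) := h2
      _ = 2 ^ a * (k:ℝ) ^ (-a) := by
          rw [Real.div_rpow hk0.le (by norm_num), Real.rpow_neg hk0.le,
            Real.rpow_neg (by norm_num : (0:ℝ) ≤ 2)]
          field_simp
  · rw [abs_of_nonpos ha]
    have h1 : (m:ℝ) ^ (-a) ≤ (k:ℝ) ^ (-a) :=
      Real.rpow_le_rpow hm0.le (by exact_mod_cast hmk) (by linarith)
    have h2 : (1:ℝ) ≤ 2 ^ (-a) :=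
      Real.one_le_rpow one_le_two (by linarith)
    nlinarith [Real.rpow_nonneg hk0.le (-a)]

/-- The series `ζ_{AV,2}^{[2]}(s₁,s₂,s₃)` with real `s₃` converges absolutely when
`2 Re s₁ + s₃ > 1` and `2 Re s₁ + 2 Re s₂ + s₃ > 3`. -/
theorem apostolVuSq_summable (s₁ s₂ : ℂ) (s₃ : ℝ) (h1 : 1 < 2 * s₁.re + s₃)
    (h2 : 3 < 2 * s₁.re + 2 * s₂.re + s₃) :
    Summable (fun k : ℕ => if 2 ≤ k then
      ‖∑ m ∈ (Finset.Icc 1 (k - 1)).filter (fun m => k < 2 * m),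
          ((m : ℂ) ^ s₁ * ((k - m : ℕ) : ℂ) ^ s₂)⁻¹‖ ^ 2 * ((k : ℝ) ^ s₃)⁻¹ else 0) := by
  set a := s₁.re with ha
  set b := s₂.re with hb
  have hD : 0 < 2*a + s₃ - 2 * max (1-b) 0 - 1 := by
    rcases le_total (1-b) 0 with h | h
    · rw [max_eq_right h]; linarith
    · rw [max_eq_left h]; linarith
  set ε : ℝ := (2*a + s₃ - 2 * max (1-b) 0 - 1) / 4 with hεdef
  have hε0 : 0 < ε := by positivity
  set c : ℝ := max (1-b) 0 + ε with hcdef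
  have hc0 : 0 ≤ c := by positivity
  have hbc : 1 < b + c := by
    rcases le_total (1-b) 0 with h | h
    · rw [hcdef, max_eq_right h]; linarith
    · rw [hcdef, max_eq_left h]; linarith
  have hZsum : Summable (fun j : ℕ => ((j:ℝ) ^ (b+c))⁻¹) :=
    Real.summable_nat_rpow_inv.mpr hbc
  set Z : ℝ := ∑' j : ℕ, ((j:ℝ) ^ (b+c))⁻¹ with hZdef
  have hZ0 : 0 ≤ Z := tsum_nonneg fun j => by positivity
  have hexp : 2*c - 2*a - s₃ < -1 := by
    rw [hcdef]; linarith
  set C : ℝ := (2 ^ |a| * Z) ^ 2 with hCdef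
  have hsumg : Summable (fun k : ℕ => C * (k:ℝ) ^ (2*c - 2*a - s₃)) :=
    (Real.summable_nat_rpow.mpr hexp).mul_left C
  refine Summable.of_nonneg_of_le (fun k => ?_) (fun k => ?_) hsumg
  · split
    · positivity
    · exact le_rfl
  · split
    next hk =>
      have hk0 : (0:ℝ) < k := by exact_mod_cast Nat.lt_of_lt_of_le two_pos hk
      -- bound the norm of the inner sum
      have key : ‖∑ m ∈ (Finset.Icc 1 (k - 1)).filter (fun m => k < 2 * m),
          ((m : ℂ) ^ s₁ * ((k - m : ℕ) : ℂ) ^ s₂)⁻¹‖ ≤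
          2 ^ |a| * Z * (k:ℝ) ^ (c - a) := by
        have hck : (k:ℝ) ^ (c - a) = (k:ℝ) ^ (-a) * (k:ℝ) ^ c := by
          rw [sub_eq_neg_add, Real.rpow_add hk0]
        calc ‖∑ m ∈ (Finset.Icc 1 (k - 1)).filter (fun m => k < 2 * m),
            ((m : ℂ) ^ s₁ * ((k - m : ℕ) : ℂ) ^ s₂)⁻¹‖
            ≤ ∑ m ∈ (Finset.Icc 1 (k - 1)).filter (fun m => k < 2 * m),
              ‖((m : ℂ) ^ s₁ * ((k - m : ℕ) : ℂ) ^ s₂)⁻¹‖ := norm_sum_le _ _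
          _ ≤ ∑ m ∈ (Finset.Icc 1 (k - 1)).filter (fun m => k < 2 * m),
              (2 ^ |a| * (k:ℝ) ^ (-a)) * ((k - m : ℕ) : ℝ) ^ (-b) := by
              refine Finset.sum_le_sum fun m hm => ?_
              simp only [Finset.mem_filter, Finset.mem_Icc] at hm
              obtain ⟨⟨hm1, hm2⟩, hm3⟩ := hm
              have hmpos : 0 < m := hm1
              have hmk : m ≤ k := le_trans hm2 (Nat.sub_le k 1)
              have hkm : 0 < k - m := by omega
              rw [norm_inv, norm_mul, Complex.norm_natCast_cpow_of_pos hmpos,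
                Complex.norm_natCast_cpow_of_pos hkm, mul_inv,
                ← Real.rpow_neg (by positivity), ← Real.rpow_neg (by positivity)]
              have hle1 : (m:ℝ) ^ (-a) ≤ 2 ^ |a| * (k:ℝ) ^ (-a) := by
                refine aux_rpow_half a hmpos hmk ?_
                have : (k:ℝ) < 2 * m := by exact_mod_cast hm3
                linarith
              exact mul_le_mul_of_nonneg_right hle1 (by positivity)
          _ = (2 ^ |a| * (k:ℝ) ^ (-a)) * ∑ m ∈ (Finset.Icc 1 (k - 1)).filter
                (fun m => k < 2 * m), ((k - m : ℕ) : ℝ) ^ (-b) := by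
              rw [Finset.mul_sum]
          _ ≤ (2 ^ |a| * (k:ℝ) ^ (-a)) * ((k:ℝ) ^ c * Z) := by
              refine mul_le_mul_of_nonneg_left ?_ (by positivity)
              -- reindex j = k - m
              have himg : ∑ j ∈ ((Finset.Icc 1 (k-1)).filter (fun m => k < 2 * m)).image
                    (fun m => k - m), (j:ℝ) ^ (-b)
                  = ∑ m ∈ (Finset.Icc 1 (k-1)).filter (fun m => k < 2 * m),
                    ((k - m : ℕ) : ℝ) ^ (-b) :=
                Finset.sum_image (fun x hx y hy hxy => by
                  simp only [Finset.coe_filter, Set.mem_setOf_eq, Finset.mem_coe, Finset.mem_filter, Finset.mem_Icc] at hx hy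
                  omega)
              have hreindex : ∑ m ∈ (Finset.Icc 1 (k - 1)).filter (fun m => k < 2 * m),
                  ((k - m : ℕ) : ℝ) ^ (-b) ≤ ∑ j ∈ Finset.Icc 1 (k-1), (j:ℝ) ^ (-b) := by
                rw [← himg]
                refine Finset.sum_le_sum_of_subset_of_nonneg ?_ (fun j _ _ => by positivity)
                intro j hj
                simp only [Finset.mem_image, Finset.mem_filter, Finset.mem_Icc] at hj ⊢
                obtain ⟨m, ⟨⟨hm1, hm2⟩, _⟩, rfl⟩ := hj
                omega
              refine hreindex.trans ?_
              have hstep : ∑ j ∈ Finset.Icc 1 (k-1), (j:ℝ) ^ (-b) ≤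
                  ∑ j ∈ Finset.Icc 1 (k-1), (k:ℝ) ^ c * ((j:ℝ) ^ (b+c))⁻¹ := by
                refine Finset.sum_le_sum fun j hj => ?_
                simp only [Finset.mem_Icc] at hj
                have hj0 : (0:ℝ) < j := by exact_mod_cast hj.1
                have hjk : (j:ℝ) ≤ k := by
                  have : j ≤ k := le_trans hj.2 (Nat.sub_le k 1)
                  exact_mod_cast this
                have heq : (j:ℝ) ^ (-b) = (j:ℝ) ^ c * ((j:ℝ) ^ (b+c))⁻¹ := by
                  rw [← Real.rpow_neg hj0.le, ← Real.rpow_add hj0]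
                  ring_nf
                rw [heq]
                exact mul_le_mul_of_nonneg_right
                  (Real.rpow_le_rpow hj0.le hjk hc0) (by positivity)
              refine hstep.trans ?_
              rw [← Finset.mul_sum]
              exact mul_le_mul_of_nonneg_left
                (Summable.sum_le_tsum _ (fun j _ => by positivity) hZsum) (by positivity)
          _ = 2 ^ |a| * Z * (k:ℝ) ^ (c - a) := by rw [hck]; ring
      have hnorm0 : (0:ℝ) ≤ ‖∑ m ∈ (Finset.Icc 1 (k - 1)).filter (fun m => k < 2 * m),
          ((m : ℂ) ^ s₁ * ((k - m : ℕ) : ℂ) ^ s₂)⁻¹‖ := norm_nonneg _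
      have hsq : ‖∑ m ∈ (Finset.Icc 1 (k - 1)).filter (fun m => k < 2 * m),
          ((m : ℂ) ^ s₁ * ((k - m : ℕ) : ℂ) ^ s₂)⁻¹‖ ^ 2 ≤
          (2 ^ |a| * Z * (k:ℝ) ^ (c - a)) ^ 2 :=
        pow_le_pow_left₀ hnorm0 key 2
      have e : ((k:ℝ) ^ (c - a)) ^ 2 * ((k:ℝ) ^ s₃)⁻¹ = (k:ℝ) ^ (2*c - 2*a - s₃) := by
        rw [← Real.rpow_natCast ((k:ℝ) ^ (c - a)) 2, ← Real.rpow_mul hk0.le,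
          ← Real.rpow_neg hk0.le, ← Real.rpow_add hk0]
        norm_num
        ring_nf
      calc ‖∑ m ∈ (Finset.Icc 1 (k - 1)).filter (fun m => k < 2 * m),
            ((m : ℂ) ^ s₁ * ((k - m : ℕ) : ℂ) ^ s₂)⁻¹‖ ^ 2 * ((k : ℝ) ^ s₃)⁻¹
          ≤ (2 ^ |a| * Z * (k:ℝ) ^ (c - a)) ^ 2 * ((k : ℝ) ^ s₃)⁻¹ :=
            mul_le_mul_of_nonneg_right hsq (by positivity)
        _ = C * (k:ℝ) ^ (2*c - 2*a - s₃) := by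
            rw [hCdef, mul_pow, mul_assoc, e]
    next => positivity
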